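/- (Sequential form of Theorem 1(i).) Let E be a finite-dimensional real inner product space and J : E → ℝ be differentiable with L-Lipschitz gradient (L > 0) and bounded from below. Let η > 0 with 2 − Lη > 0. Let (θ^m)_{m≥1} be generated by θ^{m+1} = θ^m − (Δ^m)⁻¹(∇J(θ^m) − e^m), where each Δ^m is an invertible symmetric linear map with (1/η)‖v‖² ≤ ⟨Δ^m v, v⟩ and ‖Δ^m v‖ ≤ L‖v‖ for all v, and ‖e^m‖ ≤ ε̄ for all m with ε̄ ≥ 0. Then liminf_{m→∞} ‖∇J(θ^m)‖ ≤ ((2 + Lη)/(2 − Lη)) ε̄. -/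

import Mathlib

open Filter
open scoped RealInnerProductSpace

lemma descent_lemma
    {E : Type*} [NormedAddCommGroup E] [InnerProductSpace ℝ E] [CompleteSpace E]
    (J : E → ℝ) (L : ℝ)
    (hJd : Differentiable ℝ J)
    (hlip : ∀ x y : E, ‖gradient J x - gradient J y‖ ≤ L * ‖x - y‖)
    (x y : E) :
    J y ≤ J x + ⟪gradient J x, y - x⟫ + L / 2 * ‖y - x‖ ^ 2 := by
  set d := y - x with hd
  have hgc : Continuous (gradient J) := by
    have : LipschitzWith (Real.toNNReal L) (gradient J) := by
      apply LipschitzWith.of_dist_le_mul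
      intro a b
      rw [dist_eq_norm, dist_eq_norm]
      calc ‖gradient J a - gradient J b‖ ≤ L * ‖a - b‖ := hlip a b
        _ ≤ Real.toNNReal L * ‖a - b‖ := by
            gcongr; exact le_max_left _ _
    exact this.continuous
  have hderiv : ∀ t : ℝ, HasDerivAt (fun t : ℝ => J (x + t • d))
      ⟪gradient J (x + t • d), d⟫ t := by
    intro t
    have hline : HasDerivAt (fun t : ℝ => x + t • d) d t := by
      simpa using ((hasDerivAt_id t).smul_const d).const_add x
    have hJ : HasFDerivAt J (InnerProductSpace.toDual ℝ E (gradient J (x + t • d)))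
        (x + t • d) := (hJd (x + t • d)).hasGradientAt.hasFDerivAt
    exact (hJ.comp_hasDerivAt t hline).congr_deriv (by simp)
  have hcont : Continuous fun t : ℝ => ⟪gradient J (x + t • d), d⟫ :=
    (hgc.comp (continuous_const.add (continuous_id.smul continuous_const))).inner
      continuous_const
  have hint : J (x + (1:ℝ) • d) - J (x + (0:ℝ) • d)
      = ∫ t in (0:ℝ)..1, ⟪gradient J (x + t • d), d⟫ := by
    rw [intervalIntegral.integral_eq_sub_of_hasDerivAt (fun t _ => hderiv t)
      (hcont.intervalIntegrable 0 1)]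
  have hmono : (∫ t in (0:ℝ)..1, ⟪gradient J (x + t • d), d⟫)
      ≤ ∫ t in (0:ℝ)..1, (⟪gradient J x, d⟫ + (L * ‖d‖ ^ 2) * t) := by
    apply intervalIntegral.integral_mono_on (by norm_num)
      (hcont.intervalIntegrable 0 1)
      ((continuous_const.add (continuous_const.mul continuous_id)).intervalIntegrable 0 1)
    intro t ht
    rcases ht with ⟨ht0, _⟩
    have h1 : ⟪gradient J (x + t • d), d⟫
        = ⟪gradient J x, d⟫ + ⟪gradient J (x + t • d) - gradient J x, d⟫ := by
      rw [inner_sub_left]; ring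
    rw [h1]
    show _ ≤ ⟪gradient J x, d⟫ + (L * ‖d‖ ^ 2) * t
    gcongr _ + ?_
    calc ⟪gradient J (x + t • d) - gradient J x, d⟫
        ≤ ‖gradient J (x + t • d) - gradient J x‖ * ‖d‖ := real_inner_le_norm _ _
      _ ≤ (L * ‖x + t • d - x‖) * ‖d‖ := by gcongr; exact hlip _ _
      _ = (L * ‖d‖ ^ 2) * t := by
          rw [add_sub_cancel_left, norm_smul, Real.norm_eq_abs, abs_of_nonneg ht0]
          ring
  have hrhs : (∫ t in (0:ℝ)..1, (⟪gradient J x, d⟫ + (L * ‖d‖ ^ 2) * t))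
      = ⟪gradient J x, d⟫ + L / 2 * ‖d‖ ^ 2 := by
    rw [intervalIntegral.integral_add (f := fun _ => ⟪gradient J x, d⟫)
      (g := fun t => (L * ‖d‖ ^ 2) * t) intervalIntegrable_const
      ((continuous_const.mul continuous_id').intervalIntegrable 0 1),
      intervalIntegral.integral_const_mul, integral_id, intervalIntegral.integral_const]
    simp
    ring
  have hy : x + (1:ℝ) • d = y := by rw [hd]; simp
  have hx : x + (0:ℝ) • d = x := by simp
  rw [hy, hx] at hint
  have key : J y - J x ≤ ⟪gradient J x, d⟫ + L / 2 * ‖d‖ ^ 2 := by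
    rw [hint]; exact hmono.trans_eq hrhs
  linarith

lemma quad_bound (a ε r t K : ℝ) (ha : 0 < a) (hK : a * r - ε = K) (hK0 : 0 < K)
    (hr0 : 0 < r) (hrt : r ≤ t) : r * K ≤ a * t ^ 2 - ε * t := by
  have h1 : 0 ≤ t - r := by linarith
  have h2 : 0 ≤ a * (t + r) - ε := by nlinarith
  nlinarith [mul_nonneg h1 h2]

/-- Sequential form of Theorem 1(i): for the S2E Newton-type iteration
`θ^{m+1} = θ^m − (Δ^m)⁻¹(∇J(θ^m) − e^m)` with `(1/η)‖v‖² ≤ ⟪Δ^m v, v⟫`, `‖Δ^m v‖ ≤ L‖v‖`,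
and `‖e^m‖ ≤ ε̄`, `liminf_m ‖∇J(θ^m)‖ ≤ ((2 + Lη)/(2 − Lη)) ε̄`. -/
theorem liminf_grad_norm_le
    {E : Type*} [NormedAddCommGroup E] [InnerProductSpace ℝ E] [FiniteDimensional ℝ E]
    (J : E → ℝ) (L : ℝ) (hL : 0 < L)
    (hJd : Differentiable ℝ J)
    (hlip : ∀ x y : E, ‖gradient J x - gradient J y‖ ≤ L * ‖x - y‖)
    (hbdd : BddBelow (Set.range J))
    (η : ℝ) (hη : 0 < η) (hLη : 0 < 2 - L * η)
    (θ : ℕ → E) (Δ : ℕ → E ≃ₗ[ℝ] E) (e : ℕ → E) (ε : ℝ) (hε : 0 ≤ ε)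
    (hsym : ∀ m, ∀ u v : E, ⟪Δ m u, v⟫ = ⟪u, Δ m v⟫)
    (hlower : ∀ m, ∀ v : E, (1 / η) * ‖v‖ ^ 2 ≤ ⟪Δ m v, v⟫)
    (hupper : ∀ m, ∀ v : E, ‖Δ m v‖ ≤ L * ‖v‖)
    (herr : ∀ m, ‖e m‖ ≤ ε)
    (hupd : ∀ m, θ (m + 1) = θ m - (Δ m).symm (gradient J (θ m) - e m)) :
    Filter.liminf (fun m => ‖gradient J (θ m)‖) Filter.atTop ≤
      ((2 + L * η) / (2 - L * η)) * ε := by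
  obtain ⟨B, hB⟩ := hbdd
  have hBle : ∀ x : E, B ≤ J x := fun x => hB (Set.mem_range_self x)
  set c : ℝ := (2 + L * η) / (2 - L * η) with hc
  have hc1 : 1 ≤ c := by
    rw [hc, le_div_iff₀ hLη]
    nlinarith [mul_pos hL hη]
  set g : ℕ → ℝ := fun m => ‖gradient J (θ m)‖ with hg
  have hbound : IsBoundedUnder (· ≥ ·) atTop g :=
    isBoundedUnder_of ⟨0, fun m => norm_nonneg _⟩
  have key : ∀ δ : ℝ, 0 < δ → Filter.liminf g Filter.atTop ≤ c * ε + δ := by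
    intro δ hδ
    refine liminf_le_of_frequently_le ?_ hbound
    by_contra hfreq
    rw [Filter.not_frequently] at hfreq
    simp only [not_le] at hfreq
    obtain ⟨N, hN⟩ := Filter.eventually_atTop.mp hfreq
    -- setup
    set d : ℕ → E := fun m => (Δ m).symm (gradient J (θ m) - e m) with hdDef
    have hΔd : ∀ m, Δ m (d m) = gradient J (θ m) - e m := fun m =>
      (Δ m).apply_symm_apply _
    have ha0 : 0 < 1 / η - L / 2 := by
      rw [sub_pos, div_lt_div_iff₀ (by norm_num) hη]
      nlinarith
    set r : ℝ := (c * ε + δ - ε) / L with hr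
    have hcεδ : 0 < c * ε + δ - ε := by nlinarith
    have hr0 : 0 < r := div_pos hcεδ hL
    have harε : (1 / η - L / 2) * r - ε = (1 / η - L / 2) * δ / L := by
      rw [hr, hc]
      have : 2 - L * η ≠ 0 := hLη.ne'
      have : 2 - η * L ≠ 0 := by rw [mul_comm]; exact hLη.ne'
      field_simp
      ring
    have hK' : 0 < (1 / η - L / 2) * δ / L := by positivity
    have hdge : ∀ m ≥ N, r ≤ ‖d m‖ := by
      intro m hm
      have h1 : ‖gradient J (θ m)‖ ≤ L * ‖d m‖ + ε := by
        have : gradient J (θ m) = Δ m (d m) + e m := by rw [hΔd]; abel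
        rw [this]
        calc ‖Δ m (d m) + e m‖ ≤ ‖Δ m (d m)‖ + ‖e m‖ := norm_add_le _ _
          _ ≤ L * ‖d m‖ + ε := add_le_add (hupper m _) (herr m)
      have h2 : c * ε + δ < L * ‖d m‖ + ε := lt_of_lt_of_le (hN m hm) h1
      rw [hr, div_le_iff₀ hL]
      nlinarith [mul_comm L ‖d m‖]
    have hstep : ∀ m ≥ N, J (θ (m + 1)) ≤ J (θ m) - r * ((1 / η - L / 2) * δ / L) := by
      intro m hm
      have hθ : θ (m + 1) - θ m = -(d m) := by rw [hupd m]; abel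
      have hdesc := descent_lemma J L hJd hlip (θ m) (θ (m + 1))
      rw [hθ] at hdesc
      have hinn : ⟪gradient J (θ m), -(d m)⟫
          = -(⟪Δ m (d m), d m⟫ + ⟪e m, d m⟫) := by
        rw [inner_neg_right, hΔd, inner_sub_left]
        ring
      have hlow := hlower m (d m)
      have hedm : -(ε * ‖d m‖) ≤ ⟪e m, d m⟫ := by
        have h1 : |⟪e m, d m⟫| ≤ ‖e m‖ * ‖d m‖ := abs_real_inner_le_norm _ _
        have h2 : ‖e m‖ * ‖d m‖ ≤ ε * ‖d m‖ :=
          mul_le_mul_of_nonneg_right (herr m) (norm_nonneg _)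
        have := neg_abs_le ⟪e m, d m⟫
        linarith
      have hnd : r ≤ ‖d m‖ := hdge m hm
      have hns : ‖-(d m)‖ ^ 2 = ‖d m‖ ^ 2 := by rw [norm_neg]
      rw [hinn, hns] at hdesc
      have hLd : J (θ (m + 1))
          ≤ J (θ m) - (1 / η) * ‖d m‖ ^ 2 + ε * ‖d m‖ + L / 2 * ‖d m‖ ^ 2 := by
        linarith
      have hfinal := quad_bound (1 / η - L / 2) ε r ‖d m‖ ((1 / η - L / 2) * δ / L)
        ha0 harε hK' hr0 hnd
      nlinarith [hfinal, hLd]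
    -- telescoping
    have hiter : ∀ k : ℕ, J (θ (N + k)) ≤ J (θ N) - k * (r * ((1 / η - L / 2) * δ / L)) := by
      intro k
      induction k with
      | zero => simp
      | succ n ih =>
        have := hstep (N + n) (Nat.le_add_right N n)
        push_cast
        have heq : N + (n + 1) = (N + n) + 1 := by ring
        rw [heq]
        push_cast at ih
        linarith
    obtain ⟨k, hk⟩ := exists_nat_gt ((J (θ N) - B) / (r * ((1 / η - L / 2) * δ / L)))
    have hKpos : 0 < r * ((1 / η - L / 2) * δ / L) := mul_pos hr0 hK'
    have h1 := hiter k
    have h2 := hBle (θ (N + k))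
    rw [div_lt_iff₀ hKpos] at hk
    linarith
  -- conclude
  refine le_of_forall_pos_le_add fun δ hδ => ?_
  exact key δ hδ
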